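/- Let δ > 0 and a = π/(2δ). For ω ∈ ℝ, the purely imaginary number λ = iω is a root of λ + a·e^{−λδ} = 0 if and only if ω = π/(2δ) or ω = −π/(2δ); in particular, at the bifurcation value the only roots of the characteristic equation on the imaginary axis are ±i·π/(2δ). -/

import Mathlib

/-- Let `δ > 0` and `a = π/(2δ)`.  For `ω ∈ ℝ`, the purely imaginary number
`λ = iω` is a root of `λ + a·e^{−λδ} = 0` if and only if `ω = π/(2δ)` or
`ω = −π/(2δ)`: at the bifurcation value the only characteristic roots on the
imaginary axis are `±i·π/(2δ)`. -/
theorem imaginary_axis_roots_at_bifurcation (δ : ℝ) (hδ : 0 < δ) (ω : ℝ) :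
    Complex.I * (ω : ℂ) +
        ((Real.pi / (2 * δ) : ℝ) : ℂ) * Complex.exp (-(Complex.I * (ω : ℂ)) * (δ : ℂ)) = 0 ↔
      ω = Real.pi / (2 * δ) ∨ ω = -(Real.pi / (2 * δ)) := by
  have hδ' : δ ≠ 0 := ne_of_gt hδ
  set a : ℝ := Real.pi / (2 * δ) with ha
  have ha0 : 0 < a := div_pos Real.pi_pos (by linarith)
  have hkey : -(Complex.I * (ω : ℂ)) * (δ : ℂ) = ((-(ω * δ) : ℝ) : ℂ) * Complex.I := by
    push_cast; ring
  rw [hkey, Complex.exp_mul_I, ← Complex.ofReal_cos, ← Complex.ofReal_sin]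
  constructor
  · intro h
    rw [Real.cos_neg, Real.sin_neg] at h
    have h2 : ((a * Real.cos (ω * δ) : ℝ) : ℂ)
        + ((ω - a * Real.sin (ω * δ) : ℝ) : ℂ) * Complex.I = 0 := by
      rw [← h]; push_cast; ring
    rw [Complex.ext_iff] at h2
    simp only [Complex.add_re, Complex.add_im, Complex.mul_re, Complex.mul_im,
      Complex.I_re, Complex.I_im, Complex.ofReal_re, Complex.ofReal_im,
      Complex.zero_re, Complex.zero_im, mul_zero, mul_one, zero_mul, sub_zero,
      add_zero, zero_add] at h2
    obtain ⟨hre, him⟩ := h2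
    have hcos : Real.cos (ω * δ) = 0 := by
      rcases mul_eq_zero.mp hre with h1 | h1
      · exact absurd h1 (ne_of_gt ha0)
      · exact h1
    have hsin : Real.sin (ω * δ) ^ 2 = 1 := by
      have := Real.sin_sq_add_cos_sq (ω * δ)
      rw [hcos] at this; nlinarith
    have hω : ω = a * Real.sin (ω * δ) := by linarith
    have hsq : ω ^ 2 = a ^ 2 := by rw [hω, mul_pow, hsin, mul_one]
    rcases sq_eq_sq_iff_eq_or_eq_neg.mp hsq with h1 | h1
    · exact Or.inl h1
    · exact Or.inr h1
  · intro h
    have hπ : a * δ = Real.pi / 2 := by field_simp [ha]; rw [ha]; field_simp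
    rcases h with h | h
    · subst h
      rw [show -(a * δ) = -(Real.pi / 2) by rw [hπ]]
      simp [Real.cos_pi_div_two, Real.sin_pi_div_two, Complex.ext_iff, Complex.mul_re,
        Complex.mul_im]
    · subst h
      rw [show -(-a * δ) = Real.pi / 2 by rw [← hπ]; ring]
      simp [Real.cos_pi_div_two, Real.sin_pi_div_two, Complex.ext_iff, Complex.mul_re,
        Complex.mul_im]
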